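/- For every integer d ≥ 23 there exists a unique t₀ > 0 such that d·( 3·arccos( cosh(2t₀)/(1 + 2·cosh(2t₀)) ) − π ) = 4π. Consequently, if (T₀, T₃) is a tetra-regular combinatorial triangulation with dᵢ = d for all vertices i, then the constant ball packing r = t₀·(1,…,1) ∈ (0,∞)^N satisfies K̃ᵢ(r) = 0 for all vertices i. -/

import Mathlib

open Real Finset Filter

/-- `y i = coth r i`. -/
noncomputable def yc (r : Fin 4 → ℝ) (i : Fin 4) : ℝ := Real.cosh (r i) / Real.sinh (r i)

/-- The quantity `Q(r)` whose positivity characterizes non-degenerate hyperbolic tetrahedra. -/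
noncomputable def Qh (r : Fin 4 → ℝ) : ℝ :=
  (∑ i, yc r i) ^ 2 - 2 * ∑ i, (yc r i) ^ 2 + 4

/-- The set of real ball packings of a tetrahedron. -/
noncomputable def OmegaSet : Set (Fin 4 → ℝ) := {r | (∀ i, 0 < r i) ∧ 0 < Qh r}

/-- The `i`-th virtual tetrahedron space `Dᵢ`. -/
noncomputable def Dset (i : Fin 4) : Set (Fin 4 → ℝ) :=
  {r | (∀ m, 0 < r m) ∧
    (∑ j ∈ Finset.univ.erase i, yc r j)
      + 2 * Real.sqrt (((∑ j ∈ Finset.univ.erase i, yc r j) ^ 2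
          - ∑ j ∈ Finset.univ.erase i, (yc r j) ^ 2) / 2 + 1) ≤ yc r i}

/-- The dihedral angle `β i j` of the hyperbolic tetrahedron determined by `r`. -/
noncomputable def betaAngle (r : Fin 4 → ℝ) (i j : Fin 4) : ℝ :=
  Real.arccos
    ((Real.sinh (r i) * Real.sinh (r j)
        * Real.sqrt (∏ m ∈ (Finset.univ.erase i).erase j, Real.sinh (r m)))
      / (4 * Real.sqrt (∏ m ∈ (Finset.univ.erase i).erase j, Real.sinh (r i + r j + r m)))
      * (Qh r - (yc r i + yc r j) ^ 2
          + ((∑ m ∈ (Finset.univ.erase i).erase j, yc r m) ^ 2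
              - 4 * ∏ m ∈ (Finset.univ.erase i).erase j, yc r m)))

/-- The solid angle `αᵢ` of the hyperbolic tetrahedron determined by `r`. -/
noncomputable def solidAngle (r : Fin 4 → ℝ) (i : Fin 4) : ℝ :=
  (∑ j ∈ Finset.univ.erase i, betaAngle r i j) - Real.pi

open Classical in
/-- The extended solid angle `α̃ᵢ`. -/
noncomputable def tildeAlpha (r : Fin 4 → ℝ) (i : Fin 4) : ℝ :=
  if r ∈ OmegaSet then solidAngle r i
  else if r ∈ Dset i then 2 * Real.pi else 0

/-- Given a ball packing `r` on the vertex set `Fin N`, a vertex `i` and a tetrahedron `s`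
containing `i`, the associated local packing in `(0,∞)⁴`, with the radius of `i` first. -/
noncomputable def localPacking {N : ℕ} (r : Fin N → ℝ) (i : Fin N) (s : Finset (Fin N)) :
    Fin 4 → ℝ :=
  fun m => if m = 0 then r i
    else r (((s.erase i).sort (· ≤ ·)).getD (m.val - 1) i)

/-- The extended combinatorial scalar curvature `K̃ᵢ(r)`. -/
noncomputable def Ktilde {N : ℕ} (T3 : Multiset (Finset (Fin N))) (r : Fin N → ℝ)
    (i : Fin N) : ℝ :=
  4 * Real.pi -
    ((T3.filter (fun s => i ∈ s)).map (fun s => tildeAlpha (localPacking r i s) 0)).sum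

/-- The tetra-degree of the vertex `i`. -/
def tetraDegree {N : ℕ} (T3 : Multiset (Finset (Fin N))) (i : Fin N) : ℕ :=
  (T3.filter (fun s => i ∈ s)).card

/-- `R` is a solution of the extended combinatorial Yamabe flow on the time domain `S`. -/
def IsExtYamabeFlowSolution {N : ℕ} (T3 : Multiset (Finset (Fin N)))
    (R : ℝ → Fin N → ℝ) (S : Set ℝ) : Prop :=
  (∀ t ∈ S, ∀ i, 0 < R t i) ∧
  ∀ t ∈ S, ∀ i, HasDerivWithinAt (fun u => R u i)
      (-(Ktilde T3 (R t) i) * Real.sinh (R t i)) S t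


private lemma stmt19_one_third_lt : (1:ℝ)/3 < Real.cos (9 * Real.pi / 23) := by
  have h1 : (9:ℝ) * Real.pi / 23 = Real.pi/2 - 5*Real.pi/46 := by ring
  rw [h1, Real.cos_pi_div_two_sub]
  have hπl := Real.pi_gt_d6
  have hπu := Real.pi_lt_d6
  set x : ℝ := 5*Real.pi/46 with hx
  have hx0 : (0:ℝ) ≤ x := by positivity
  have hxl : (0.3414 : ℝ) ≤ x := by rw [hx]; nlinarith
  have hxu : x ≤ (0.3415 : ℝ) := by rw [hx]; nlinarith
  have hx1 : |x| ≤ 1 := by rw [abs_of_nonneg hx0]; linarith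
  have hb := Real.sin_bound hx1
  rw [abs_of_nonneg hx0] at hb
  have hb2 := (abs_le.1 hb).1
  nlinarith [pow_le_pow_left₀ hx0 hxu 3, pow_le_pow_left₀ hx0 hxu 4]

private lemma stmt19_betaAngle_const (t : ℝ) (ht : 0 < t) {j : Fin 4}
    (hj : j ∈ Finset.univ.erase (0 : Fin 4)) :
    betaAngle (fun _ => t) 0 j = Real.arccos (Real.cosh (2*t) / (1 + 2*Real.cosh (2*t))) := by
  have hs : 0 < Real.sinh t := Real.sinh_pos_iff.2 ht
  have hs3 : 0 < Real.sinh (t + t + t) := Real.sinh_pos_iff.2 (by linarith)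
  have hcard : ((Finset.univ.erase (0:Fin 4)).erase j).card = 2 := by
    rw [Finset.card_erase_of_mem hj, Finset.card_erase_of_mem (Finset.mem_univ _)]
    simp
  have h2 : Real.cosh (2*t) = Real.cosh t^2 + Real.sinh t^2 := by
    rw [two_mul, Real.cosh_add]; ring
  have h3 : Real.sinh (t+t+t) = Real.sinh t * (1 + 2*Real.cosh (2*t)) := by
    rw [Real.sinh_add, Real.sinh_add, Real.cosh_add, h2]
    linear_combination Real.sinh t * Real.cosh_sq_sub_sinh_sq t
  have hden : (0:ℝ) < 1 + 2*Real.cosh (2*t) := by positivity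
  simp only [betaAngle, Qh, yc, Finset.prod_const, Finset.sum_const, hcard, Fin.sum_univ_four,
    nsmul_eq_mul, Nat.cast_ofNat, Finset.card_univ, Fintype.card_fin]
  congr 1
  rw [Real.sqrt_sq hs.le, Real.sqrt_sq hs3.le, h3, h2]
  field_simp
  ring

private lemma stmt19_solidAngle_const (t : ℝ) (ht : 0 < t) :
    solidAngle (fun _ => t) 0
      = 3 * Real.arccos (Real.cosh (2*t) / (1 + 2*Real.cosh (2*t))) - Real.pi := by
  unfold solidAngle
  rw [Finset.sum_congr rfl (fun j hj => stmt19_betaAngle_const t ht hj), Finset.sum_const]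
  have hcard : (Finset.univ.erase (0:Fin 4)).card = 3 := by
    rw [Finset.card_erase_of_mem (Finset.mem_univ _)]; simp
  rw [hcard, nsmul_eq_mul]
  push_cast
  ring

set_option maxHeartbeats 1000000 in
/-- For every `d ≥ 23` there is a unique `t₀ > 0` with
`d(3 arccos(cosh 2t₀/(1+2 cosh 2t₀)) − π) = 4π`; consequently for any tetra-regular
triangulation of degree `d`, the constant packing `t₀·𝟙` has vanishing extended curvature. -/
theorem stmt19 (d : ℕ) (hd : 23 ≤ d) :
    (∃! t₀ : ℝ, 0 < t₀ ∧
      (d : ℝ) * (3 * Real.arccos (Real.cosh (2 * t₀) / (1 + 2 * Real.cosh (2 * t₀)))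
        - Real.pi) = 4 * Real.pi) ∧
    ∀ (N : ℕ), 1 ≤ N → ∀ (T3 : Multiset (Finset (Fin N))), (∀ s ∈ T3, s.card = 4) →
      (∀ i, tetraDegree T3 i = d) →
      ∀ t₀ : ℝ, (0 < t₀ ∧
        (d : ℝ) * (3 * Real.arccos (Real.cosh (2 * t₀) / (1 + 2 * Real.cosh (2 * t₀)))
          - Real.pi) = 4 * Real.pi) →
      ∀ i, Ktilde T3 (fun _ => t₀) i = 0 := by
  have hd0 : (0:ℝ) < (d:ℝ) := by positivity
  have hdne : (d:ℝ) ≠ 0 := hd0.ne'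
  have hπ := Real.pi_pos
  set f : ℝ → ℝ := fun t => Real.cosh (2*t) / (1 + 2*Real.cosh (2*t)) with hf
  have hden : ∀ t : ℝ, (0:ℝ) < 1 + 2*Real.cosh (2*t) := fun t => by positivity
  have hfge : ∀ t, 0 ≤ f t := fun t => by
    have := Real.cosh_pos (x := 2*t); positivity
  have hfle : ∀ t, f t ≤ 1 := fun t => by
    rw [hf, div_le_one (hden t)]
    nlinarith [Real.cosh_pos (x := 2*t)]
  have hmono : StrictMonoOn f (Set.Ici (0:ℝ)) := by
    intro a ha b hb hab
    have hc : Real.cosh (2*a) < Real.cosh (2*b) := by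
      rw [Real.cosh_lt_cosh, abs_of_nonneg (by simp at ha; linarith),
        abs_of_nonneg (by simp at hb ⊢; linarith)]
      linarith
    rw [hf]
    simp only
    rw [div_lt_div_iff₀ (hden a) (hden b)]
    nlinarith [Real.cosh_pos (x := 2*a), Real.cosh_pos (x := 2*b)]
  have hf0 : f 0 = 1/3 := by norm_num [hf]
  obtain ⟨c, hcdef⟩ : ∃ c : ℝ, c = Real.pi/3 + 4*Real.pi/(3*(d:ℝ)) := ⟨_, rfl⟩
  have hteps : 0 < 4*Real.pi/(3*(d:ℝ)) := by positivity
  have hcgt3 : Real.pi/3 < c := by rw [hcdef]; linarith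
  have hc9 : c ≤ 9*Real.pi/23 := by
    have h69 : (69:ℝ) ≤ 3*(d:ℝ) := by
      have : (23:ℝ) ≤ (d:ℝ) := by exact_mod_cast hd
      linarith
    have : 4*Real.pi/(3*(d:ℝ)) ≤ 4*Real.pi/69 := by
      apply div_le_div_of_nonneg_left (by positivity) (by norm_num) h69
    rw [hcdef]; linarith
  have hcpos : 0 < c := by rw [hcdef]; positivity
  have hclt2 : c < Real.pi/2 := by nlinarith
  have hcltpi : c ≤ Real.pi := by nlinarith
  have hcos_pos : 0 < Real.cos c := Real.cos_pos_of_mem_Ioo ⟨by linarith, hclt2⟩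
  have hcos_lt : Real.cos c < 1/2 := by
    have := Real.cos_lt_cos_of_nonneg_of_le_pi (by positivity : (0:ℝ) ≤ Real.pi/3)
      hcltpi hcgt3
    rwa [Real.cos_pi_div_three] at this
  have hcos_gt : 1/3 < Real.cos c := by
    have h9 : Real.cos (9*Real.pi/23) ≤ Real.cos c :=
      Real.cos_le_cos_of_nonneg_of_le_pi hcpos.le (by nlinarith) hc9
    linarith [stmt19_one_third_lt]
  -- the point T where f exceeds cos c
  have h12 : 0 < 1 - 2*Real.cos c := by linarith
  obtain ⟨T, hT⟩ : ∃ T : ℝ, T = Real.cos c/(1 - 2*Real.cos c) + 1 := ⟨_, rfl⟩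
  have hT0 : 0 < T := by rw [hT]; positivity
  have hfT : Real.cos c < f T := by
    have h1 : 2*T + 1 ≤ Real.exp (2*T) := Real.add_one_le_exp _
    have h2 : Real.exp (2*T)/2 ≤ Real.cosh (2*T) := by
      rw [Real.cosh_eq]
      have := Real.exp_pos (-(2*T))
      linarith
    have h3 : T + 1/2 ≤ Real.cosh (2*T) := by linarith
    have hM : (Real.cos c/(1 - 2*Real.cos c)) * (1 - 2*Real.cos c) = Real.cos c := by
      exact div_mul_cancel₀ _ h12.ne'
    rw [hf]
    simp only
    rw [lt_div_iff₀ (hden T)]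
    rw [hT] at h3
    nlinarith [hM]
  have hcont : ContinuousOn f (Set.Icc 0 T) := by
    apply Continuous.continuousOn
    apply Continuous.div
    · fun_prop
    · fun_prop
    · exact fun t => (hden t).ne'
  obtain ⟨t₀, ht₀mem, ht₀eq⟩ := intermediate_value_Ioo hT0.le hcont
    (by rw [hf0]; exact ⟨hcos_gt, hfT⟩ : Real.cos c ∈ Set.Ioo (f 0) (f T))
  have ht₀pos : 0 < t₀ := ht₀mem.1
  have harc : Real.arccos (f t₀) = c := by
    rw [ht₀eq, Real.arccos_cos hcpos.le hcltpi]
  have ht₀prop : (d : ℝ) * (3 * Real.arccos (Real.cosh (2 * t₀) / (1 + 2 * Real.cosh (2 * t₀)))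
        - Real.pi) = 4 * Real.pi := by
    have : Real.arccos (Real.cosh (2 * t₀) / (1 + 2 * Real.cosh (2 * t₀))) = c := harc
    rw [this, hcdef]
    field_simp
    ring
  have huniq : ∀ t : ℝ, 0 < t →
      (d : ℝ) * (3 * Real.arccos (Real.cosh (2 * t) / (1 + 2 * Real.cosh (2 * t)))
        - Real.pi) = 4 * Real.pi → t = t₀ := by
    intro t htpos hteq
    have hA : Real.arccos (f t) = c := by
      have h1 : (d:ℝ) * (3 * Real.arccos (f t) - Real.pi) = 4 * Real.pi := hteq
      have h2 : 3 * Real.arccos (f t) - Real.pi = 4 * Real.pi / (d:ℝ) := by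
        field_simp at h1 ⊢
        linarith
      rw [hcdef]
      field_simp at h2 ⊢
      linarith
    have hft : f t = Real.cos c := by
      rw [← hA, Real.cos_arccos (by linarith [hfge t]) (hfle t)]
    exact hmono.injOn (Set.mem_Ici.2 htpos.le) (Set.mem_Ici.2 ht₀pos.le)
      (by rw [hft, ht₀eq])
  refine ⟨⟨t₀, ⟨ht₀pos, ht₀prop⟩, fun t ht => huniq t ht.1 ht.2⟩, ?_⟩
  -- second part
  intro N _ T3 _ hdeg t₁ ht₁ i
  obtain ⟨ht₁pos, ht₁eq⟩ := ht₁
  have hs1 : 0 < Real.sinh t₁ := Real.sinh_pos_iff.2 ht₁pos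
  have hQ : 0 < Qh (fun _ => t₁) := by
    simp only [Qh, yc, Fin.sum_univ_four]
    nlinarith [sq_nonneg (Real.cosh t₁ / Real.sinh t₁)]
  have hmemΩ : (fun _ : Fin 4 => t₁) ∈ OmegaSet := ⟨fun _ => ht₁pos, hQ⟩
  have htalpha : tildeAlpha (fun _ : Fin 4 => t₁) 0
      = 3 * Real.arccos (Real.cosh (2*t₁) / (1 + 2*Real.cosh (2*t₁))) - Real.pi := by
    rw [tildeAlpha, if_pos hmemΩ, stmt19_solidAngle_const t₁ ht₁pos]
  have hlocal : ∀ s : Finset (Fin N), localPacking (fun _ => t₁) i s = fun _ => t₁ := by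
    intro s
    funext m
    simp [localPacking]
  rw [Ktilde]
  rw [Multiset.map_congr rfl (fun s _ => by rw [hlocal s, htalpha])]
  rw [Multiset.map_const', Multiset.sum_replicate]
  have hcard : (Multiset.filter (fun s => i ∈ s) T3).card = d := hdeg i
  rw [hcard, nsmul_eq_mul]
  have : (d:ℝ) * (3 * Real.arccos (Real.cosh (2*t₁) / (1 + 2*Real.cosh (2*t₁))) - Real.pi)
      = 4 * Real.pi := by
    convert ht₁eq using 4
  linarith
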